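/- On ℂ⁴ with coordinates (α,β,γ,δ), let k be a non-negative integer and consider the vector fields 𝔷₁ = β∂/∂α + δ∂/∂γ (components (β,0,δ,0)), 𝔷_Q = α∂/∂β + γ∂/∂δ (components (0,α,0,γ)), 𝔏 = 2α∂/∂α + (k+2)β∂/∂β − (k+2)γ∂/∂γ − 2δ∂/∂δ, and 𝔷₂ = 𝔷_Q + δ^k·𝔷₁. Then the Lie brackets satisfy [𝔏, 𝔷₁] = k·𝔷₁ and [𝔏, 𝔷₂] = −k·𝔷₂, where for vector fields X, Y on ℂ⁴ the Lie bracket is [X,Y](p) = DY(p)·X(p) − DX(p)·Y(p). -/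
import Mathlib

open ContinuousLinearMap

private noncomputable abbrev pr (i : Fin 4) : (Fin 4 → ℂ) →L[ℂ] ℂ :=
  ContinuousLinearMap.proj i

private lemma pow_pred_mul (k : ℕ) (z : ℂ) : (k : ℂ) * z ^ (k - 1) * z = (k : ℂ) * z ^ k := by
  cases k with
  | zero => simp
  | succ n => simp [pow_succ]; ring

private lemma hZ1 (p : Fin 4 → ℂ) :
    HasFDerivAt (fun q : Fin 4 → ℂ => ![q 1, 0, q 3, 0])
      (ContinuousLinearMap.pi ![pr 1, 0, pr 3, 0]) p := by
  apply hasFDerivAt_pi.2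
  intro i
  fin_cases i <;>
    simp only [Matrix.cons_val_zero, Matrix.cons_val_one, Matrix.head_cons,
      Matrix.cons_val_two, Matrix.tail_cons, Matrix.cons_val_three, Fin.isValue]
  · exact hasFDerivAt_apply 1 p
  · exact hasFDerivAt_const 0 p
  · exact hasFDerivAt_apply 3 p
  · exact hasFDerivAt_const 0 p

private lemma hL (k : ℕ) (p : Fin 4 → ℂ) :
    HasFDerivAt
      (fun q : Fin 4 → ℂ =>
        ![2 * q 0, ((k : ℂ) + 2) * q 1, -((k : ℂ) + 2) * q 2, -2 * q 3])
      (ContinuousLinearMap.pi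
        ![(2 : ℂ) • pr 0, ((k : ℂ) + 2) • pr 1, (-((k : ℂ) + 2)) • pr 2,
          (-2 : ℂ) • pr 3]) p := by
  apply hasFDerivAt_pi.2
  intro i
  fin_cases i <;>
    simp only [Matrix.cons_val_zero, Matrix.cons_val_one, Matrix.head_cons,
      Matrix.cons_val_two, Matrix.tail_cons, Matrix.cons_val_three, Fin.isValue]
  · exact (hasFDerivAt_apply 0 p).const_mul 2
  · exact (hasFDerivAt_apply 1 p).const_mul _
  · exact (hasFDerivAt_apply 2 p).const_mul _
  · exact (hasFDerivAt_apply 3 p).const_mul _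

private lemma hZ2 (k : ℕ) (p : Fin 4 → ℂ) :
    HasFDerivAt
      (fun q : Fin 4 → ℂ =>
        (![0, q 0, 0, q 2] : Fin 4 → ℂ) + q 3 ^ k • ![q 1, 0, q 3, 0])
      (ContinuousLinearMap.pi
        ![(p 3 ^ k) • pr 1 + (p 1) • (((k : ℂ) * p 3 ^ (k - 1)) • pr 3),
          pr 0,
          (p 3 ^ k) • pr 3 + (p 3) • (((k : ℂ) * p 3 ^ (k - 1)) • pr 3),
          pr 2]) p := by
  apply hasFDerivAt_pi.2
  intro i
  fin_cases i <;>
    simp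
  · exact ((hasDerivAt_pow k (p 3)).comp_hasFDerivAt (𝕜 := ℂ) p (hasFDerivAt_apply 3 p)).mul
      (hasFDerivAt_apply 1 p)
  · exact hasFDerivAt_apply 0 p
  · exact ((hasDerivAt_pow k (p 3)).comp_hasFDerivAt (𝕜 := ℂ) p (hasFDerivAt_apply 3 p)).mul
      (hasFDerivAt_apply 3 p)
  · exact hasFDerivAt_apply 2 p

/-- Lie bracket of vector fields on `ℂ⁴`: `[X,Y](p) = DY(p)·X(p) − DX(p)·Y(p)`. -/
noncomputable def lieBracketC4 (X Y : (Fin 4 → ℂ) → (Fin 4 → ℂ)) (p : Fin 4 → ℂ) :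
    Fin 4 → ℂ :=
  fderiv ℂ Y p (X p) - fderiv ℂ X p (Y p)

/-- On `ℂ⁴` with coordinates `(α,β,γ,δ)`, for `𝔷₁ = β∂/∂α + δ∂/∂γ`,
`𝔷_Q = α∂/∂β + γ∂/∂δ`, `𝔏 = 2α∂/∂α + (k+2)β∂/∂β − (k+2)γ∂/∂γ − 2δ∂/∂δ` and
`𝔷₂ = 𝔷_Q + δ^k·𝔷₁`, one has `[𝔏, 𝔷₁] = k·𝔷₁` and `[𝔏, 𝔷₂] = −k·𝔷₂`. -/
theorem bracket_relations_first_series (k : ℕ) :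
    (fun (Z₁ ZQ L : (Fin 4 → ℂ) → (Fin 4 → ℂ)) =>
      (fun Z₂ : (Fin 4 → ℂ) → (Fin 4 → ℂ) =>
        (∀ p : Fin 4 → ℂ, lieBracketC4 L Z₁ p = (k : ℂ) • Z₁ p)
        ∧ (∀ p : Fin 4 → ℂ, lieBracketC4 L Z₂ p = (-(k : ℂ)) • Z₂ p))
      (fun p => ZQ p + (p 3) ^ k • Z₁ p))
    (fun p => ![p 1, 0, p 3, 0])
    (fun p => ![0, p 0, 0, p 2])
    (fun p => ![2 * p 0, ((k : ℂ) + 2) * p 1, -((k : ℂ) + 2) * p 2, -2 * p 3]) := by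
  refine ⟨fun p => ?_, fun p => ?_⟩
  · unfold lieBracketC4
    rw [(hZ1 p).fderiv, (hL k p).fderiv]
    funext i
    fin_cases i <;>
      simp [ContinuousLinearMap.pi_apply, Pi.sub_apply, Pi.smul_apply, smul_eq_mul] <;>
      ring
  · unfold lieBracketC4
    rw [(hZ2 k p).fderiv, (hL k p).fderiv]
    funext i
    fin_cases i <;>
      simp [ContinuousLinearMap.pi_apply, Pi.sub_apply, Pi.smul_apply, smul_eq_mul]
    · linear_combination (-2 * p 1) * pow_pred_mul k (p 3)
    · ring
    · linear_combination (-2 * p 3) * pow_pred_mul k (p 3)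
    · ring
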